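/- Let g : ℕ → ℝ be a function taking values in {-1, 0, 1}, and suppose there exists M ≥ 0 such that for every k, |∑_{n=0}^{k} g(n)| ≤ M. Let f : ℝ → ℝ be a nonnegative, continuously differentiable function with f(x) → 0 as x → ∞, f'(x) < 0, |f'| decreasing, and ∫_0^∞ |f'(x)| dx < ∞. Then |∑_{n=0}^{∞} g(n) f(n)| ≤ ∑_{n=0}^{⌊M⌋} f(n). -/

import Mathlib

open MeasureTheory Filter

theorem stmt_0 (g : ℕ → ℝ) (hg : ∀ n, g n ∈ ({-1, 0, 1} : Set ℝ))
    (M : ℝ) (hM : 0 ≤ M)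
    (hpart : ∀ k : ℕ, |∑ n ∈ Finset.range (k + 1), g n| ≤ M)
    (f : ℝ → ℝ) (hf0 : ∀ x, 0 ≤ f x)
    (hfC1 : ContDiff ℝ 1 f)
    (hftend : Tendsto f atTop (nhds 0))
    (hf' : ∀ x, deriv f x < 0)
    (hanti : Antitone fun x => |deriv f x|)
    (hint : IntegrableOn (fun x => |deriv f x|) (Set.Ici (0 : ℝ))) :
    |∑' n : ℕ, g n * f n| ≤ ∑ n ∈ Finset.range (⌊M⌋₊ + 1), f n := by
  set m := ⌊M⌋₊ with hm
  set F : ℕ → ℝ := fun n => f n with hFdef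
  set G : ℕ → ℝ := fun k => ∑ n ∈ Finset.range (k + 1), g n with hGdef
  set B : ℝ := ∑ n ∈ Finset.range (m + 1), F n with hBdef
  have hanti' : StrictAnti f := strictAnti_of_deriv_neg hf'
  simp only [Set.mem_insert_iff, Set.mem_singleton_iff] at hg
  have hF0 : ∀ n, 0 ≤ F n := fun n => hf0 _
  -- basic facts about g
  have hgabs : ∀ n, |g n| ≤ 1 := by
    intro n
    rcases hg n with h | h | h <;> rw [h] <;> norm_num
  -- partial sums are integers
  have hGint : ∀ k, ∃ z : ℤ, (z : ℝ) = G k := by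
    intro k
    induction k with
    | zero =>
      rcases hg 0 with h | h | h
      · exact ⟨-1, by simp [hGdef, h]⟩
      · exact ⟨0, by simp [hGdef, h]⟩
      · exact ⟨1, by simp [hGdef, h]⟩
    | succ k ih =>
      obtain ⟨z, hz⟩ := ih
      have hstep : G (k + 1) = G k + g (k + 1) := by
        simp [hGdef, Finset.sum_range_succ]
      rcases hg (k + 1) with h | h | h
      · exact ⟨z - 1, by rw [hstep, h, ← hz]; push_cast; ring⟩
      · exact ⟨z, by rw [hstep, h, ← hz]; ring⟩
      · exact ⟨z + 1, by rw [hstep, h, ← hz]; push_cast; ring⟩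
  -- |G k| ≤ m
  have hGm : ∀ k, |G k| ≤ (m : ℝ) := by
    intro k
    obtain ⟨z, hz⟩ := hGint k
    have h1 : |(z : ℝ)| ≤ M := by rw [hz]; exact hpart k
    have h2 : |z| ≤ ⌊M⌋ := Int.le_floor.2 (by push_cast; exact h1)
    have h3 : (⌊M⌋ : ℤ) = (m : ℤ) := (Int.natCast_floor_eq_floor hM).symm
    rw [← hz]
    have h4 : ((|z| : ℤ) : ℝ) ≤ ((m : ℤ) : ℝ) := by exact_mod_cast h2.trans_eq h3
    push_cast at h4
    exact h4
  -- |G k| ≤ k + 1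
  have hGk : ∀ k : ℕ, |G k| ≤ (k : ℝ) + 1 := by
    intro k
    calc |G k| ≤ ∑ n ∈ Finset.range (k + 1), |g n| :=
          Finset.abs_sum_le_sum_abs _ _
      _ ≤ ∑ n ∈ Finset.range (k + 1), 1 :=
          Finset.sum_le_sum fun i _ => hgabs i
      _ = (k : ℝ) + 1 := by simp
  -- f is decreasing along naturals
  have hfle : ∀ i j : ℕ, i ≤ j → F j ≤ F i := by
    intro i j hij
    exact hanti'.antitone (by exact_mod_cast hij)
  -- key summation-by-parts identity
  have key : ∀ K : ℕ,
      (m : ℝ) * F K + ∑ i ∈ Finset.range K, min (m : ℝ) (i + 1) * (F i - F (i + 1))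
        = (∑ j ∈ Finset.range (min K m), F j) + ((m : ℝ) - min (m : ℝ) K) * F K := by
    intro K
    induction K with
    | zero => simp
    | succ K ih =>
      rcases lt_or_ge K m with hKm | hKm
      · have h1 : min (K + 1) m = K + 1 := min_eq_left hKm
        have h2 : min K m = K := min_eq_left hKm.le
        have h3 : min (m : ℝ) ((K : ℝ) + 1) = (K : ℝ) + 1 := by
          rw [min_eq_right]; exact_mod_cast hKm
        have h4 : min (m : ℝ) (K : ℝ) = (K : ℝ) := by
          rw [min_eq_right]; exact_mod_cast hKm.le
        rw [h2, h4] at ih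
        rw [Finset.sum_range_succ, h1, Finset.sum_range_succ]
        push_cast
        rw [h3]
        linear_combination ih
      · have h1 : min (K + 1) m = m := min_eq_right (by omega)
        have h2 : min K m = m := min_eq_right hKm
        have h3 : min (m : ℝ) ((K : ℝ) + 1) = (m : ℝ) := by
          rw [min_eq_left]; push_cast; exact_mod_cast Nat.le_succ_of_le hKm
        have h4 : min (m : ℝ) (K : ℝ) = (m : ℝ) := by
          rw [min_eq_left]; exact_mod_cast hKm
        rw [h2, h4] at ih
        rw [Finset.sum_range_succ, h1]
        push_cast
        rw [h3]
        linear_combination ih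
  have hB0 : ∀ n : ℕ, n ≤ m + 1 → ∑ i ∈ Finset.range n, F i ≤ B := by
    intro n hn
    rw [hBdef]
    exact Finset.sum_le_sum_of_subset_of_nonneg
      (Finset.range_subset_range.2 hn) (fun i _ _ => hF0 i)
  -- the finite bound
  have hfin : ∀ n : ℕ, |∑ i ∈ Finset.range n, g i * F i| ≤ B := by
    intro n
    rcases le_or_gt n (m + 1) with hn | hn
    · calc |∑ i ∈ Finset.range n, g i * F i|
          ≤ ∑ i ∈ Finset.range n, |g i * F i| := Finset.abs_sum_le_sum_abs _ _
        _ ≤ ∑ i ∈ Finset.range n, F i := by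
            apply Finset.sum_le_sum
            intro i _
            rw [abs_mul, abs_of_nonneg (hF0 _)]
            nlinarith [hgabs i, hF0 i, abs_nonneg (g i)]
        _ ≤ B := hB0 n hn
    · -- n = K + 1 with K ≥ m
      obtain ⟨K, rfl⟩ : ∃ K, n = K + 1 := ⟨n - 1, by omega⟩
      have hKm : m ≤ K := by omega
      have habel : ∑ i ∈ Finset.range (K + 1), g i * F i
          = F K * G K - ∑ i ∈ Finset.range K, (F (i + 1) - F i) * G i := by
        have h := Finset.sum_range_by_parts F g (K + 1)
        simp only [smul_eq_mul, Nat.add_sub_cancel] at h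
        calc ∑ i ∈ Finset.range (K + 1), g i * F i
            = ∑ i ∈ Finset.range (K + 1), F i * g i := by
              refine Finset.sum_congr rfl fun i _ => mul_comm _ _
          _ = F K * G K - ∑ i ∈ Finset.range K, (F (i + 1) - F i) * G i := h
      rw [habel]
      have hbound : |F K * G K - ∑ i ∈ Finset.range K, (F (i + 1) - F i) * G i|
          ≤ (m : ℝ) * F K + ∑ i ∈ Finset.range K, min (m : ℝ) (i + 1) * (F i - F (i + 1)) := by
        calc |F K * G K - ∑ i ∈ Finset.range K, (F (i + 1) - F i) * G i|
            ≤ |F K * G K| + |∑ i ∈ Finset.range K, (F (i + 1) - F i) * G i| :=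
              abs_sub _ _
          _ ≤ (m : ℝ) * F K + ∑ i ∈ Finset.range K, min (m : ℝ) (i + 1) * (F i - F (i + 1)) := by
              gcongr ?_ + ?_
              · rw [abs_mul, abs_of_nonneg (hF0 _), mul_comm]
                exact mul_le_mul_of_nonneg_right (hGm K) (hF0 _)
              · calc |∑ i ∈ Finset.range K, (F (i + 1) - F i) * G i|
                    ≤ ∑ i ∈ Finset.range K, |(F (i + 1) - F i) * G i| :=
                      Finset.abs_sum_le_sum_abs _ _
                  _ ≤ ∑ i ∈ Finset.range K, min (m : ℝ) (i + 1) * (F i - F (i + 1)) := by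
                      apply Finset.sum_le_sum
                      intro i _
                      rw [abs_mul]
                      have hd : F (i + 1) ≤ F i := hfle i (i + 1) (by omega)
                      have hd' : |F (i + 1) - F i| = F i - F (i + 1) := by
                        rw [abs_sub_comm, abs_of_nonneg (by linarith)]
                      rw [hd', mul_comm]
                      apply mul_le_mul_of_nonneg_right _ (by linarith)
                      exact le_min (hGm i) (by exact_mod_cast hGk i)
      refine hbound.trans ?_
      rw [key K, min_eq_right hKm, min_eq_left (by exact_mod_cast hKm), sub_self, zero_mul,
        add_zero]
      exact hB0 m (by omega)
  -- pass to the limit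
  by_cases hs : Summable fun n : ℕ => g n * F n
  · have htend : Tendsto (fun n => |∑ i ∈ Finset.range n, g i * F i|) atTop
        (nhds |∑' n : ℕ, g n * F n|) :=
      (continuous_abs.tendsto _).comp hs.hasSum.tendsto_sum_nat
    exact le_of_tendsto' htend hfin
  · rw [tsum_eq_zero_of_not_summable hs, abs_zero]
    simpa using hB0 0 (by omega)
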